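/- Let n ≥ 2, a ∈ ℝ, and define h(Y) = |Y − aI|²·|Y + aI|² for Y ∈ ℝ^{n×n}. Then h(Y) = |Y|⁴ + 2a²(n−2)|Y|² + 8a²|Y_a|² + n²a⁴ − 8a²·s₂(Y), where Y_a = ½(Y−Yᵀ) and s₂(Y) is the sum of principal 2×2 minors of Y. -/
import Mathlib


open Matrix

theorem double_well_identity_general (n : ℕ) (hn : 2 ≤ n) (a : ℝ)
    (Y : Matrix (Fin n) (Fin n) ℝ) :
    ((Y - a • 1)ᵀ * (Y - a • 1)).trace * ((Y + a • 1)ᵀ * (Y + a • 1)).trace =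
      ((Yᵀ * Y).trace)^2 + 2 * a^2 * ((n : ℝ) - 2) * (Yᵀ * Y).trace +
      8 * a^2 * ((((1/2 : ℝ) • (Y - Yᵀ))ᵀ * ((1/2 : ℝ) • (Y - Yᵀ))).trace) +
      (n : ℝ)^2 * a^4 -
      8 * a^2 * ∑ p ∈ Finset.univ.filter (fun p : Fin n × Fin n => p.1 < p.2),
        (Y p.1 p.1 * Y p.2 p.2 - Y p.1 p.2 * Y p.2 p.1) := by
  have hminus : ((Y - a • 1)ᵀ * (Y - a • 1)).trace
      = (Yᵀ*Y).trace - 2*a*Y.trace + n*a^2 := by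
    simp [transpose_sub, transpose_smul, sub_mul, mul_sub, trace_sub, trace_smul,
      smul_mul_assoc, mul_smul_comm, trace_one, trace_transpose, smul_smul]
    ring
  have hplus : ((Y + a • 1)ᵀ * (Y + a • 1)).trace
      = (Yᵀ*Y).trace + 2*a*Y.trace + n*a^2 := by
    simp [transpose_add, transpose_smul, add_mul, mul_add, trace_add, trace_smul,
      smul_mul_assoc, mul_smul_comm, trace_one, trace_transpose, smul_smul]
    ring
  have hskew : (((1/2:ℝ) • (Y - Yᵀ))ᵀ * ((1/2:ℝ) • (Y - Yᵀ))).trace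
      = ((Yᵀ*Y).trace - (Y*Y).trace)/2 := by
    simp [transpose_sub, transpose_smul, sub_mul, mul_sub, trace_sub, trace_smul,
      smul_mul_assoc, mul_smul_comm, trace_transpose, smul_smul]
    rw [trace_mul_comm Yᵀ Y]
    ring
  have hsum : ∑ p ∈ Finset.univ.filter (fun p : Fin n × Fin n => p.1 < p.2),
        (Y p.1 p.1 * Y p.2 p.2 - Y p.1 p.2 * Y p.2 p.1)
      = (Y.trace^2 - (Y*Y).trace)/2 := by
    set f : Fin n × Fin n → ℝ := fun p => Y p.1 p.1 * Y p.2 p.2 - Y p.1 p.2 * Y p.2 p.1 with hf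
    have htot : ∑ p : Fin n × Fin n, f p = Y.trace^2 - (Y*Y).trace := by
      rw [Fintype.sum_prod_type]
      simp only [hf, Finset.sum_sub_distrib, Matrix.trace, Matrix.diag, Matrix.mul_apply,
        sq, Finset.sum_mul, Finset.mul_sum]
      rw [Finset.sum_comm]
    have hswap : ∑ p ∈ Finset.univ.filter (fun p : Fin n × Fin n => p.2 < p.1), f p
        = ∑ p ∈ Finset.univ.filter (fun p : Fin n × Fin n => p.1 < p.2), f p := by
      apply Finset.sum_nbij' (fun p => Prod.swap p) (fun p => Prod.swap p) <;>
        simp [hf, mul_comm]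
    have hnot : ∑ p ∈ Finset.univ.filter (fun p : Fin n × Fin n => ¬ p.1 < p.2), f p
        = ∑ p ∈ Finset.univ.filter (fun p : Fin n × Fin n => p.2 < p.1), f p := by
      symm
      apply Finset.sum_subset
      · intro p hp
        simp only [Finset.mem_filter, Finset.mem_univ, true_and] at hp ⊢
        exact not_lt_of_gt hp
      · intro p hp hp2
        simp only [Finset.mem_filter, Finset.mem_univ, true_and] at hp hp2
        have : p.1 = p.2 := le_antisymm (not_lt.mp hp2) (not_lt.mp hp)
        simp [hf, this, mul_comm]
    have hsplit := Finset.sum_filter_add_sum_filter_not Finset.univ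
      (fun p : Fin n × Fin n => p.1 < p.2) f
    rw [hnot, hswap] at hsplit
    rw [htot] at hsplit
    linarith
  rw [hminus, hplus, hskew, hsum]
  ring
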